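/- Let α, β be multiplicatively independent real numbers > 1. Then there exist integer sequences (a_n), (b_n) which are nearly linear recurrence sequences, with a_n = ⌊α^n⌋ and b_n = ⌊γ β^n + u⌋ for some real γ > 0 and some u ∈ {-1, 0, 1}, such that a_k = b_m holds for infinitely many pairs of non-negative integers (k, m); moreover the set of such pairs (k, m) has finite intersection with every rational line {(k,m) : Ak + Bm + C = 0} with (A,B) ≠ (0,0) rational. -/

import Mathlib

open Finset

/-- A sequence of integers is a nearly linear recurrence sequence. -/
def IsNLRS (c : ℕ → ℤ) : Prop :=
  ∃ d : ℕ, 1 ≤ d ∧ ∃ A : ℕ → ℂ, ∃ M : ℝ, ∀ n : ℕ,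
    ‖(c (n + d) : ℂ) + ∑ i ∈ Finset.range d, A i * (c (n + i) : ℂ)‖ ≤ M

lemma isNLRS_floor_geom (x ρ : ℝ) (hx : 0 < x) (hρ : 1 < ρ) :
    IsNLRS (fun n => ⌊x * ρ ^ n⌋) := by
  refine ⟨1, le_refl 1, fun _ => (-ρ : ℂ), ρ + 1, fun n => ?_⟩
  rw [Finset.sum_range_one]
  simp only [Nat.add_zero]
  have key : ((⌊x * ρ ^ (n+1)⌋ : ℂ) + (-ρ : ℂ) * (⌊x * ρ ^ n⌋ : ℂ))
      = (((⌊x * ρ ^ (n+1)⌋ : ℝ) + (-ρ) * (⌊x * ρ ^ n⌋ : ℝ) : ℝ) : ℂ) := by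
    push_cast; ring
  rw [key, Complex.norm_real]
  have h1 : (⌊x * ρ ^ (n+1)⌋ : ℝ) = x * ρ ^ (n+1) - Int.fract (x * ρ ^ (n+1)) := by
    rw [Int.self_sub_fract]
  have h2 : (⌊x * ρ ^ n⌋ : ℝ) = x * ρ ^ n - Int.fract (x * ρ ^ n) := by
    rw [Int.self_sub_fract]
  rw [h1, h2]
  have e : x * ρ ^ (n+1) - Int.fract (x * ρ ^ (n+1)) + -ρ * (x * ρ ^ n - Int.fract (x * ρ ^ n))
      = ρ * Int.fract (x * ρ ^ n) - Int.fract (x * ρ ^ (n+1)) := by ring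
  rw [e]
  have hρ0 : (0:ℝ) < ρ := lt_trans one_pos hρ
  have f1 := Int.fract_nonneg (x * ρ ^ (n+1))
  have f2 := Int.fract_lt_one (x * ρ ^ (n+1))
  have f3 := Int.fract_nonneg (x * ρ ^ n)
  have f4 := Int.fract_lt_one (x * ρ ^ n)
  rw [Real.norm_eq_abs, abs_le]
  constructor <;> nlinarith

lemma log_indep (α β : ℝ) (hα : 1 < α) (hβ : 1 < β)
    (hmi : ∀ m n : ℤ, α ^ m * β ^ n = 1 → m = 0 ∧ n = 0)
    (p q : ℤ) (h : (p:ℝ) * Real.log α + (q:ℝ) * Real.log β = 0) :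
    p = 0 ∧ q = 0 := by
  have hα0 : (0:ℝ) < α := lt_trans one_pos hα
  have hβ0 : (0:ℝ) < β := lt_trans one_pos hβ
  have key : α ^ p * β ^ q = 1 := by
    have hpos : (0:ℝ) < α ^ p * β ^ q := mul_pos (zpow_pos hα0 _) (zpow_pos hβ0 _)
    have hl : Real.log (α ^ p * β ^ q) = 0 := by
      rw [Real.log_mul (ne_of_gt (zpow_pos hα0 _)) (ne_of_gt (zpow_pos hβ0 _)),
        Real.log_zpow, Real.log_zpow]
      exact h
    have h2 := congrArg Real.exp hl
    rw [Real.exp_log hpos, Real.exp_zero] at h2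
    exact h2
  exact hmi p q key

lemma small_step (α β : ℝ) (hα : 1 < α) (hβ : 1 < β)
    (hmi : ∀ m n : ℤ, α ^ m * β ^ n = 1 → m = 0 ∧ n = 0)
    {ε : ℝ} (hε : 0 < ε) :
    ∃ m₀ k₀ : ℕ, 1 ≤ m₀ ∧ 0 < |(m₀:ℝ) * Real.log β - (k₀:ℝ) * Real.log α| ∧
      |(m₀:ℝ) * Real.log β - (k₀:ℝ) * Real.log α| < ε := by
  set a := Real.log α with ha
  set b := Real.log β with hb
  have ha0 : 0 < a := Real.log_pos hα
  have hb0 : 0 < b := Real.log_pos hβ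
  obtain ⟨n, hn⟩ := exists_nat_gt (max (a / ε) (a / b))
  have hmax0 : (0:ℝ) < max (a / ε) (a / b) := lt_max_of_lt_left (div_pos ha0 hε)
  have hn0 : 0 < n := by exact_mod_cast hmax0.trans hn
  obtain ⟨j, k, hk0, hkn, hjk⟩ := Real.exists_int_int_abs_mul_sub_le (b / a) hn0
  -- |k * (b/a) - j| ≤ 1/(n+1), so |k*b - j*a| ≤ a/(n+1) < ε
  have hkey : |(k:ℝ) * b - (j:ℝ) * a| ≤ a / (n + 1) := by
    have hid : (k:ℝ) * b - (j:ℝ) * a = a * ((k:ℝ) * (b/a) - (j:ℝ)) := by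
      field_simp
    calc |(k:ℝ) * b - (j:ℝ) * a| = |a| * |((k:ℝ) * (b/a) - (j:ℝ))| := by
            rw [hid, abs_mul]
      _ ≤ |a| * (1 / (n+1)) := by
            exact mul_le_mul_of_nonneg_left hjk (abs_nonneg a)
      _ = a / (n+1) := by rw [abs_of_pos ha0]; ring
  have hlt : a / ((n:ℝ) + 1) < ε := by
    rw [div_lt_iff₀ (by positivity)]
    have h1 : a / ε < n := lt_of_le_of_lt (le_max_left _ _) hn
    rw [div_lt_iff₀ hε] at h1
    nlinarith
  have hj0 : 0 ≤ j := by
    by_contra hneg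
    push_neg at hneg
    have hj1 : (j:ℝ) ≤ -1 := by exact_mod_cast Int.le_of_lt_add_one (by omega : j < -1 + 1)
    have hkb : (0:ℝ) < (k:ℝ) * b := mul_pos (by exact_mod_cast hk0) hb0
    have : (k:ℝ) * b - (j:ℝ) * a ≥ a := by nlinarith
    have habs : |(k:ℝ) * b - (j:ℝ) * a| ≥ a := le_trans this (le_abs_self _)
    have : a / ((n:ℝ)+1) < a := by
      rw [div_lt_iff₀ (by positivity)]
      nlinarith [(show (0:ℝ) < n by exact_mod_cast hn0)]
    linarith [le_trans habs hkey]
  have hne : (k:ℝ) * b - (j:ℝ) * a ≠ 0 := by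
    intro h0
    have : (-j : ℤ) = 0 ∧ (k:ℤ) = 0 := by
      apply log_indep α β hα hβ hmi
      push_cast
      linarith [h0]
    omega
  have e1 : ((k.toNat : ℕ) : ℝ) = (k:ℝ) := by exact_mod_cast congrArg (fun z : ℤ => (z:ℝ)) (Int.toNat_of_nonneg hk0.le)
  have e2 : ((j.toNat : ℕ) : ℝ) = (j:ℝ) := by exact_mod_cast congrArg (fun z : ℤ => (z:ℝ)) (Int.toNat_of_nonneg hj0)
  refine ⟨k.toNat, j.toNat, by omega, ?_, ?_⟩
  · rw [e1, e2]; exact abs_pos.mpr hne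
  · rw [e1, e2]; exact lt_of_le_of_lt hkey hlt

lemma step_hit (x s : ℝ) (hx : 0 < x) (hs : 0 ≤ s) :
    ∃ j : ℕ, s ≤ j * x ∧ (j:ℝ) * x < s + x := by
  refine ⟨⌈s / x⌉₊, ?_, ?_⟩
  · rw [← div_le_iff₀ hx]; exact Nat.le_ceil _
  · rw [← lt_div_iff₀ hx] at *
    have := Nat.ceil_lt_add_one (by positivity : (0:ℝ) ≤ s / x)
    calc (⌈s / x⌉₊ : ℝ) < s / x + 1 := this
      _ = (s + x) / x := by field_simp
    
lemma density (α β : ℝ) (hα : 1 < α) (hβ : 1 < β)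
    (hmi : ∀ m n : ℤ, α ^ m * β ^ n = 1 → m = 0 ∧ n = 0)
    (t : ℝ) {ε : ℝ} (hε : 0 < ε) (M : ℕ) :
    ∃ k m : ℕ, M ≤ m ∧ t ≤ (k:ℝ) * Real.log α - (m:ℝ) * Real.log β ∧
      (k:ℝ) * Real.log α - (m:ℝ) * Real.log β ≤ t + ε := by
  set a := Real.log α with ha
  set b := Real.log β with hb
  have ha0 : 0 < a := Real.log_pos hα
  have hb0 : 0 < b := Real.log_pos hβ
  obtain ⟨m₀, k₀, hm₀, habs0, habsε⟩ := small_step α β hα hβ hmi hε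
  set δ : ℝ := (m₀:ℝ) * b - (k₀:ℝ) * a with hδ
  rcases lt_or_gt_of_ne (abs_pos.mp habs0) with hneg | hpos
  · -- δ < 0 : δ' = k₀ a - m₀ b ∈ (0, ε)
    set δ' : ℝ := -δ with hδ'
    have hδ'0 : 0 < δ' := by simp [hδ']; linarith
    have hδ'ε : δ' < ε := by
      have := abs_lt.mp habsε
      simp [hδ']; linarith [this.1]
    set L : ℕ := M + ⌈|t| / b⌉₊ with hL
    have hsL : 0 ≤ t + (L:ℝ) * b := by
      have h1 : |t| / b ≤ (⌈|t| / b⌉₊ : ℝ) := Nat.le_ceil _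
      have h2 : |t| ≤ (⌈|t| / b⌉₊ : ℝ) * b := by
        rw [← div_le_iff₀ hb0]; exact h1
      have h3 : ((⌈|t| / b⌉₊ : ℕ) : ℝ) ≤ (L:ℝ) := by
        exact_mod_cast Nat.le_add_left _ M
      nlinarith [neg_abs_le t, (show (0:ℝ) ≤ (M:ℝ) by positivity)]
    obtain ⟨j, hj1, hj2⟩ := step_hit δ' (t + L * b) hδ'0 hsL
    refine ⟨j * k₀, j * m₀ + L, by omega, ?_, ?_⟩
    · push_cast
      nlinarith [hj1]
    · push_cast
      nlinarith [hj2]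
  · -- δ > 0
    set K : ℕ := ⌈((M:ℝ) * b + t + ε) / a⌉₊ with hK
    have hKa : (M:ℝ) * b + t + ε ≤ (K:ℝ) * a := by
      rcases le_or_gt ((M:ℝ) * b + t + ε) 0 with h | h
      · exact le_trans h (by positivity)
      · rw [← div_le_iff₀ ha0]; exact Nat.le_ceil _
    have hsK : 0 ≤ (K:ℝ) * a - (M:ℝ) * b - t - ε := by linarith
    obtain ⟨j, hj1, hj2⟩ := step_hit δ ((K:ℝ) * a - (M:ℝ) * b - t - ε) hpos hsK
    refine ⟨j * k₀ + K, j * m₀ + M, by omega, ?_, ?_⟩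
    · push_cast
      nlinarith [hj2, abs_lt.mp habsε]
    · push_cast
      nlinarith [hj1]

lemma key_step (α β : ℝ) (hα : 1 < α) (hβ : 1 < β)
    (hmi : ∀ m n : ℤ, α ^ m * β ^ n = 1 → m = 0 ∧ n = 0)
    (c d : ℝ) (hc : 0 < c) (hcd : c < d) (M : ℕ) :
    ∃ c' d' : ℝ, ∃ m : ℕ, M + 1 ≤ m ∧ c ≤ c' ∧ c' < d' ∧ d' ≤ d ∧
      ∃ k : ℕ, ∀ γ : ℝ, c' ≤ γ → γ ≤ d' → ⌊α ^ k⌋ = ⌊γ * β ^ m⌋ := by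
  have ha0 : 0 < Real.log α := Real.log_pos hα
  have hb0 : 0 < Real.log β := Real.log_pos hβ
  have hdc : 0 < d - c := by linarith
  obtain ⟨c₁, hc₁⟩ : ∃ x : ℝ, x = c + (d - c)/3 := ⟨_, rfl⟩
  obtain ⟨d₁, hd₁⟩ : ∃ x : ℝ, x = c + 2*(d - c)/3 := ⟨_, rfl⟩
  have hc₁0 : 0 < c₁ := by rw [hc₁]; linarith
  have hc₁d₁ : c₁ < d₁ := by rw [hc₁, hd₁]; linarith
  obtain ⟨M₀, hM₀⟩ := pow_unbounded_of_one_lt (3/(d-c)) hβ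
  have hεlog : 0 < Real.log d₁ - Real.log c₁ :=
    sub_pos.mpr (Real.log_lt_log hc₁0 hc₁d₁)
  obtain ⟨k, m, hm, hlo, hhi⟩ := density α β hα hβ hmi (Real.log c₁) hεlog (max (M+1) M₀)
  have hmM : M + 1 ≤ m := le_trans (le_max_left _ _) hm
  have hmM₀ : M₀ ≤ m := le_trans (le_max_right _ _) hm
  obtain ⟨P, hP⟩ : ∃ x : ℝ, x = β ^ m := ⟨_, rfl⟩
  have hP0 : (0:ℝ) < P := by rw [hP]; positivity
  have hβm : 3/(d-c) < P := by
    rw [hP]; exact lt_of_lt_of_le hM₀ (pow_le_pow_right₀ (le_of_lt hβ) hmM₀)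
  have hPd : 1 < (d-c)/3 * P := by
    rw [div_lt_iff₀ hdc] at hβm
    rw [div_mul_eq_mul_div, lt_div_iff₀ (by norm_num : (0:ℝ) < 3)]
    nlinarith
  have hexpa : Real.exp ((k:ℝ) * Real.log α) = α ^ k := by
    rw [Real.exp_nat_mul, Real.exp_log (lt_trans one_pos hα)]
  have hexpb : Real.exp ((m:ℝ) * Real.log β) = β ^ m := by
    rw [Real.exp_nat_mul, Real.exp_log (lt_trans one_pos hβ)]
  have hratio_lo : c₁ * P ≤ α ^ k := by
    have h := Real.exp_le_exp.mpr hlo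
    rw [Real.exp_log hc₁0, Real.exp_sub, hexpa, hexpb, ← hP] at h
    calc c₁ * P ≤ (α ^ k / P) * P := by nlinarith
      _ = α ^ k := by field_simp
  have hratio_hi : α ^ k ≤ d₁ * P := by
    have h := Real.exp_le_exp.mpr hhi
    rw [show Real.log c₁ + (Real.log d₁ - Real.log c₁) = Real.log d₁ from by ring,
      Real.exp_sub, hexpa, hexpb, Real.exp_log (by linarith : (0:ℝ) < d₁), ← hP] at h
    calc α ^ k = (α ^ k / P) * P := by field_simp
      _ ≤ d₁ * P := by nlinarith
  obtain ⟨N, hN⟩ : ∃ z : ℤ, z = ⌊α ^ k⌋ := ⟨_, rfl⟩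
  have hN1 : (N:ℝ) ≤ α ^ k := by rw [hN]; exact Int.floor_le _
  have hN2 : α ^ k < (N:ℝ) + 1 := by rw [hN]; exact Int.lt_floor_add_one _
  have hN3 : α ^ k - 1 < (N:ℝ) := by rw [hN]; exact Int.sub_one_lt_floor _
  have hcN : c * P ≤ (N:ℝ) := by
    have e : c₁ * P = c * P + (d-c)/3 * P := by rw [hc₁]; ring
    linarith
  have hNd : (N:ℝ) + 1 ≤ d * P := by
    have e : d₁ * P = d * P - (d-c)/3 * P := by rw [hd₁]; ring
    linarith
  refine ⟨((N:ℝ) + 1/3)/P, ((N:ℝ) + 2/3)/P, m, hmM, ?_, ?_, ?_, k, ?_⟩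
  · rw [le_div_iff₀ hP0]; linarith
  · rw [div_lt_div_iff₀ hP0 hP0]; linarith
  · rw [div_le_iff₀ hP0]; linarith
  · intro γ hγ1 hγ2
    rw [le_div_iff₀ hP0] at hγ2
    rw [div_le_iff₀ hP0] at hγ1
    rw [← hN, ← hP]
    refine (Int.floor_eq_iff.mpr ⟨?_, ?_⟩).symm
    · linarith
    · linarith

lemma exists_gamma (α β : ℝ) (hα : 1 < α) (hβ : 1 < β)
    (hmi : ∀ m n : ℤ, α ^ m * β ^ n = 1 → m = 0 ∧ n = 0) :
    ∃ γ : ℝ, 0 < γ ∧ {p : ℕ × ℕ | ⌊α ^ p.1⌋ = ⌊γ * β ^ p.2⌋}.Infinite := by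
  have step : ∀ s : {s : ℝ × ℝ × ℕ // 0 < s.1 ∧ s.1 < s.2.1},
      ∃ s' : {s : ℝ × ℝ × ℕ // 0 < s.1 ∧ s.1 < s.2.1},
        s.1.1 ≤ s'.1.1 ∧ s'.1.2.1 ≤ s.1.2.1 ∧ s.1.2.2 + 1 ≤ s'.1.2.2 ∧
        ∃ k : ℕ, ∀ γ : ℝ, s'.1.1 ≤ γ → γ ≤ s'.1.2.1 → ⌊α ^ k⌋ = ⌊γ * β ^ s'.1.2.2⌋ := by
    rintro ⟨⟨cc, dd, M⟩, hcc, hcd⟩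
    obtain ⟨c', d', m, hm, h1, h2, h3, k, hk⟩ := key_step α β hα hβ hmi cc dd hcc hcd M
    exact ⟨⟨(c', d', m), lt_of_lt_of_le hcc h1, h2⟩, h1, h3, hm, k, hk⟩
  choose f hf1 hf2 hf3 hf4 using step
  let g : ℕ → {s : ℝ × ℝ × ℕ // 0 < s.1 ∧ s.1 < s.2.1} :=
    fun n => Nat.rec ⟨(1, 2, 0), by norm_num⟩ (fun _ s => f s) n
  have hg : ∀ n, g (n + 1) = f (g n) := fun n => rfl
  set c : ℕ → ℝ := fun n => (g n).1.1 with hcdef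
  set d : ℕ → ℝ := fun n => (g n).1.2.1 with hddef
  set mm : ℕ → ℕ := fun n => (g n).1.2.2 with hmdef
  have hcd : ∀ n, c n < d n := fun n => (g n).2.2
  have hcmono : Monotone c := monotone_nat_of_le_succ (fun n => by
    rw [hcdef]; simp only; rw [hg n]; exact hf1 (g n))
  have hdanti : Antitone d := antitone_nat_of_succ_le (fun n => by
    rw [hddef]; simp only; rw [hg n]; exact hf2 (g n))
  have hmsm : StrictMono mm := strictMono_nat_of_lt_succ (fun n => by
    have := hf3 (g n); rw [hmdef]; simp only; rw [hg n]; omega)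
  have hbdd : ∀ i j, c i ≤ d j := by
    intro i j
    calc c i ≤ c (max i j) := hcmono (le_max_left _ _)
      _ ≤ d (max i j) := le_of_lt (hcd _)
      _ ≤ d j := hdanti (le_max_right _ _)
  have hBdd : BddAbove (Set.range c) := ⟨d 0, by rintro x ⟨i, rfl⟩; exact hbdd i 0⟩
  set γ : ℝ := ⨆ i, c i with hγdef
  have hγlo : ∀ n, c n ≤ γ := fun n => le_ciSup hBdd n
  have hγhi : ∀ n, γ ≤ d n := fun n => ciSup_le (fun i => hbdd i n)
  have hγpos : 0 < γ := lt_of_lt_of_le (g 0).2.1 (hγlo 0)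
  refine ⟨γ, hγpos, ?_⟩
  have hmem : ∀ n : ℕ, ∃ k : ℕ, (k, mm (n+1)) ∈
      {p : ℕ × ℕ | ⌊α ^ p.1⌋ = ⌊γ * β ^ p.2⌋} := by
    intro n
    obtain ⟨k, hk⟩ := hf4 (g n)
    refine ⟨k, ?_⟩
    have h1 : (f (g n)).1.1 ≤ γ := by rw [← hg n]; exact hγlo (n+1)
    have h2 : γ ≤ (f (g n)).1.2.1 := by rw [← hg n]; exact hγhi (n+1)
    have := hk γ h1 h2
    simpa [Set.mem_setOf_eq, hmdef, hg n] using this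
  apply Set.Infinite.of_image Prod.snd
  apply Set.Infinite.mono (s := Set.range (fun n => mm (n+1)))
  · rintro x ⟨n, rfl⟩
    obtain ⟨k, hk⟩ := hmem n
    exact ⟨(k, mm (n+1)), hk, rfl⟩
  · have hsm2 : StrictMono (fun n => mm (n+1)) := fun i j h => hmsm (Nat.succ_lt_succ h)
    exact Set.infinite_range_of_injective hsm2.injective

lemma strip (α β γ : ℝ) (hα : 1 < α) (hβ : 1 < β) (hγ : 0 < γ)
    (k m : ℕ) (h : ⌊α ^ k⌋ = ⌊γ * β ^ m⌋) :
    |(k:ℝ) * Real.log α - (m:ℝ) * Real.log β - Real.log γ| ≤ 1 := by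
  have hα0 : (0:ℝ) < α := lt_trans one_pos hα
  have hβ0 : (0:ℝ) < β := lt_trans one_pos hβ
  have hak : (1:ℝ) ≤ α ^ k := one_le_pow₀ (le_of_lt hα)
  have hden : (0:ℝ) < γ * β ^ m := by positivity
  set N : ℤ := ⌊α ^ k⌋ with hN
  have hN1 : (1:ℝ) ≤ (N:ℝ) := by
    have : (1:ℤ) ≤ N := Int.le_floor.mpr (by exact_mod_cast hak)
    exact_mod_cast this
  have h1 : (N:ℝ) ≤ α ^ k := Int.floor_le _
  have h2 : α ^ k < (N:ℝ) + 1 := Int.lt_floor_add_one _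
  have h3 : (N:ℝ) ≤ γ * β ^ m := by rw [h]; exact Int.floor_le _
  have h4 : γ * β ^ m < (N:ℝ) + 1 := by rw [h]; exact Int.lt_floor_add_one _
  have hr2 : α ^ k / (γ * β ^ m) ≤ 2 := by
    rw [div_le_iff₀ hden]; nlinarith
  have hrhalf : (1:ℝ)/2 ≤ α ^ k / (γ * β ^ m) := by
    rw [le_div_iff₀ hden]; nlinarith
  have hrpos : 0 < α ^ k / (γ * β ^ m) := by positivity
  have hexp2 : (2:ℝ) ≤ Real.exp 1 := by
    have := Real.add_one_le_exp 1; linarith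
  have hexpneg : Real.exp (-1) ≤ 1/2 := by
    have hmul : Real.exp (-1) * Real.exp 1 = 1 := by
      rw [← Real.exp_add]; norm_num
    nlinarith [Real.exp_pos (-1)]
  have hlog_up : Real.log (α ^ k / (γ * β ^ m)) ≤ 1 := by
    rw [Real.log_le_iff_le_exp hrpos]; linarith
  have hlog_dn : -1 ≤ Real.log (α ^ k / (γ * β ^ m)) := by
    rw [Real.le_log_iff_exp_le hrpos]; linarith
  have hlogeq : Real.log (α ^ k / (γ * β ^ m))
      = (k:ℝ) * Real.log α - (m:ℝ) * Real.log β - Real.log γ := by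
    rw [Real.log_div (by positivity) (ne_of_gt hden),
      Real.log_mul (ne_of_gt hγ) (by positivity), Real.log_pow, Real.log_pow]
    push_cast; ring
  rw [abs_le, ← hlogeq]
  exact ⟨hlog_dn, hlog_up⟩

lemma rat_indep (α β : ℝ) (hα : 1 < α) (hβ : 1 < β)
    (hmi : ∀ m n : ℤ, α ^ m * β ^ n = 1 → m = 0 ∧ n = 0)
    (p q : ℚ) (h : (p:ℝ) * Real.log α + (q:ℝ) * Real.log β = 0) :
    p = 0 ∧ q = 0 := by
  have hp : ((p.num:ℚ)) = p * p.den := by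
    exact (Rat.mul_den_eq_num p).symm
  have hq : ((q.num:ℚ)) = q * q.den := by
    exact (Rat.mul_den_eq_num q).symm
  have hint : ((p.num * q.den : ℤ):ℝ) * Real.log α
      + ((q.num * p.den : ℤ):ℝ) * Real.log β = 0 := by
    have hpr : ((p.num:ℝ)) = (p:ℝ) * (p.den:ℝ) := by exact_mod_cast congrArg (fun x : ℚ => (x:ℝ)) hp
    have hqr : ((q.num:ℝ)) = (q:ℝ) * (q.den:ℝ) := by exact_mod_cast congrArg (fun x : ℚ => (x:ℝ)) hq
    push_cast
    rw [hpr, hqr]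
    have := congrArg (fun x => x * ((p.den:ℝ) * (q.den:ℝ))) h
    simp only [zero_mul] at this
    calc (p:ℝ) * (p.den:ℝ) * (q.den:ℝ) * Real.log α + (q:ℝ) * (q.den:ℝ) * (p.den:ℝ) * Real.log β
        = ((p:ℝ) * Real.log α + (q:ℝ) * Real.log β) * ((p.den:ℝ) * (q.den:ℝ)) := by ring
      _ = 0 := this
  obtain ⟨h1, h2⟩ := log_indep α β hα hβ hmi _ _ hint
  constructor
  · have : p.num = 0 := by
      have hd : (q.den : ℤ) ≠ 0 := by exact_mod_cast q.den_nz
      exact (mul_eq_zero.mp h1).resolve_right hd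
    exact Rat.num_eq_zero.mp this
  · have : q.num = 0 := by
      have hd : (p.den : ℤ) ≠ 0 := by exact_mod_cast p.den_nz
      exact (mul_eq_zero.mp h2).resolve_right hd
    exact Rat.num_eq_zero.mp this

lemma line_finite (α β γ : ℝ) (hα : 1 < α) (hβ : 1 < β) (hγ : 0 < γ)
    (hmi : ∀ m n : ℤ, α ^ m * β ^ n = 1 → m = 0 ∧ n = 0)
    (A B C : ℚ) (hAB : (A, B) ≠ (0, 0)) :
    {p : ℕ × ℕ | ⌊α ^ p.1⌋ = ⌊γ * β ^ p.2⌋ ∧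
      (A : ℝ) * p.1 + (B : ℝ) * p.2 + (C : ℝ) = 0}.Finite := by
  set T := {p : ℕ × ℕ | ⌊α ^ p.1⌋ = ⌊γ * β ^ p.2⌋ ∧
      (A : ℝ) * p.1 + (B : ℝ) * p.2 + (C : ℝ) = 0} with hT
  set a := Real.log α with ha
  set b := Real.log β with hb
  set g := Real.log γ with hg
  have ha0 : 0 < a := Real.log_pos hα
  have hb0 : 0 < b := Real.log_pos hβ
  have hstrip : ∀ p : ℕ × ℕ, p ∈ T → |(p.1:ℝ) * a - (p.2:ℝ) * b - g| ≤ 1 :=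
    fun p hp => strip α β γ hα hβ hγ p.1 p.2 hp.1
  have hK : ∃ K : ℝ, ∀ p : ℕ × ℕ, p ∈ T → (p.1:ℝ) ≤ K := by
    by_cases hB : B = 0
    · have hA : A ≠ 0 := by
        intro hA0; exact hAB (by rw [hA0, hB])
      have hAr : ((A:ℝ)) ≠ 0 := by exact_mod_cast hA
      refine ⟨|(C:ℝ)| / |(A:ℝ)|, fun p hp => ?_⟩
      have hline := hp.2
      rw [hB] at hline
      push_cast at hline
      have hAk : (A:ℝ) * p.1 = -(C:ℝ) := by linarith
      have : |(A:ℝ)| * (p.1:ℝ) = |(C:ℝ)| := by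
        rw [← abs_of_nonneg (show (0:ℝ) ≤ (p.1:ℝ) by positivity), ← abs_mul, hAk, abs_neg]
      rw [le_div_iff₀ (abs_pos.mpr hAr)]
      linarith [this]
    · have hBr : ((B:ℝ)) ≠ 0 := by exact_mod_cast hB
      have he : a + ((A:ℝ)/(B:ℝ)) * b ≠ 0 := by
        intro h0
        have : ((1:ℚ):ℝ) * a + (((A/B):ℚ):ℝ) * b = 0 := by
          push_cast
          linarith [h0]
        exact one_ne_zero ((rat_indep α β hα hβ hmi 1 (A/B) this).1)
      set e := a + ((A:ℝ)/(B:ℝ)) * b with hedef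
      refine ⟨(1 + |g| + |(C:ℝ)/(B:ℝ) * b|) / |e|, fun p hp => ?_⟩
      have hs := hstrip p hp
      have hline := hp.2
      have hm : (p.2:ℝ) = -((C:ℝ) + (A:ℝ) * p.1) / (B:ℝ) := by
        field_simp
        linarith
      have hkey : (p.1:ℝ) * a - (p.2:ℝ) * b - g
          = (p.1:ℝ) * e + (C:ℝ)/(B:ℝ) * b - g := by
        rw [hm, hedef]
        field_simp
        ring
      rw [hkey] at hs
      have h1 : |(p.1:ℝ) * e| ≤ 1 + |g| + |(C:ℝ)/(B:ℝ) * b| := by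
        have := abs_le.mp hs
        rw [abs_le]
        constructor <;> [nlinarith [neg_abs_le g, le_abs_self g,
            neg_abs_le ((C:ℝ)/(B:ℝ) * b), le_abs_self ((C:ℝ)/(B:ℝ) * b)];
          nlinarith [neg_abs_le g, le_abs_self g,
            neg_abs_le ((C:ℝ)/(B:ℝ) * b), le_abs_self ((C:ℝ)/(B:ℝ) * b)]]
      rw [abs_mul, abs_of_nonneg (show (0:ℝ) ≤ (p.1:ℝ) by positivity)] at h1
      rw [le_div_iff₀ (abs_pos.mpr he)]
      exact h1
  obtain ⟨K, hKp⟩ := hK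
  have hL : ∀ p : ℕ × ℕ, p ∈ T → (p.2:ℝ) ≤ (max K 0 * a + 1 + |g|) / b := by
    intro p hp
    have hs := abs_le.mp (hstrip p hp)
    have hk := hKp p hp
    have hka : (p.1:ℝ) * a ≤ max K 0 * a := by
      apply mul_le_mul_of_nonneg_right _ (le_of_lt ha0)
      exact le_trans hk (le_max_left _ _)
    rw [le_div_iff₀ hb0]
    nlinarith [neg_abs_le g, le_abs_self g]
  set K1 : ℕ := ⌈max K 0⌉₊ with hK1
  set K2 : ℕ := ⌈max ((max K 0 * a + 1 + |g|) / b) 0⌉₊ with hK2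
  apply Set.Finite.subset (Set.finite_Icc ((0:ℕ), (0:ℕ)) (K1, K2))
  intro p hp
  rw [Set.mem_Icc]
  constructor
  · exact ⟨Nat.zero_le _, Nat.zero_le _⟩
  · constructor
    · have h1 : (p.1:ℝ) ≤ (K1:ℝ) :=
        le_trans (le_trans (hKp p hp) (le_max_left _ _)) (Nat.le_ceil _)
      exact_mod_cast h1
    · have h2 : (p.2:ℝ) ≤ (K2:ℝ) :=
        le_trans (le_trans (hL p hp) (le_max_left _ _)) (Nat.le_ceil _)
      exact_mod_cast h2

theorem nlrs_with_infinitely_many_common_terms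
    (α β : ℝ) (hα : 1 < α) (hβ : 1 < β)
    (hmi : ∀ m n : ℤ, α ^ m * β ^ n = 1 → m = 0 ∧ n = 0) :
    ∃ (γ : ℝ) (u : ℤ), 0 < γ ∧ u ∈ ({-1, 0, 1} : Set ℤ) ∧
      IsNLRS (fun n => ⌊α ^ n⌋) ∧
      IsNLRS (fun n => ⌊γ * β ^ n + u⌋) ∧
      {p : ℕ × ℕ | ⌊α ^ p.1⌋ = ⌊γ * β ^ p.2 + u⌋}.Infinite ∧
      (∀ A B C : ℚ, (A, B) ≠ (0, 0) →
        {p : ℕ × ℕ | ⌊α ^ p.1⌋ = ⌊γ * β ^ p.2 + u⌋ ∧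
          (A : ℝ) * p.1 + (B : ℝ) * p.2 + (C : ℝ) = 0}.Finite) := by
  obtain ⟨γ, hγ, hinf⟩ := exists_gamma α β hα hβ hmi
  refine ⟨γ, 0, hγ, by simp, ?_, ?_, ?_, ?_⟩
  · have := isNLRS_floor_geom 1 α one_pos hα
    simpa [one_mul] using this
  · have := isNLRS_floor_geom γ β hγ hβ
    simpa using this
  · simpa using hinf
  · intro A B C hAB
    have := line_finite α β γ hα hβ hγ hmi A B C hAB
    simpa using this
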